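/- For positive integers k and ℓ, with s_0 = k and s_n = (s_0 s_1 ⋯ s_{n−1})^ℓ + 1 for n ≥ 1, the Kellogg–Curtiss-type constant K_{k,ℓ} := Σ_{n=0}^∞ 1/(s_{n+1} − 1) is irrational. In particular, the Kellogg–Curtiss constant K = Σ_{n=0}^∞ 1/(S_n − 1) = K_{1,1}, where S_n is Sylvester's sequence (S_0 = 2, S_{n+1} = (S_n − 1)S_n + 1), is irrational. -/

import Mathlib

open Finset

private lemma aux_irr (l : ℕ) (hl : 0 < l)
    (s : ℕ → ℕ) (hs0 : 1 ≤ s 0)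
    (hs : ∀ n : ℕ, s (n + 1) = (∏ i ∈ Finset.range (n + 1), s i) ^ l + 1) :
    Irrational (∑' n : ℕ, 1 / ((s (n + 1) : ℝ) - 1)) := by
  set a : ℕ → ℕ := fun n => ∏ i ∈ Finset.range (n + 1), s i with ha
  have hs1 : ∀ i, 1 ≤ s i := by
    intro i
    cases i with
    | zero => exact hs0
    | succ n => rw [hs]; exact Nat.succ_le_succ (Nat.zero_le _)
  have ha1 : ∀ n, 1 ≤ a n := fun n => Finset.one_le_prod' (fun i _ => hs1 i)
  have harec : ∀ n, a (n + 1) = a n * (a n ^ l + 1) := by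
    intro n
    simp only [ha]
    rw [Finset.prod_range_succ, hs n]
  have hgrow : ∀ n, 2 * a n ≤ a (n + 1) := by
    intro n
    rw [harec n, mul_comm]
    refine Nat.mul_le_mul_left _ ?_
    have : 1 ≤ a n ^ l := Nat.one_le_pow _ _ (ha1 n)
    omega
  have hstep : ∀ n j, 2 ^ j * a n ≤ a (n + j) := by
    intro n j
    induction j with
    | zero => simp
    | succ j ih =>
      calc 2 ^ (j + 1) * a n = 2 * (2 ^ j * a n) := by ring
        _ ≤ 2 * a (n + j) := Nat.mul_le_mul_left _ ih
        _ ≤ a (n + j + 1) := hgrow _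
  have hpow : ∀ n, 2 ^ n ≤ a n := by
    intro n
    have h := hstep 0 n
    have h2 : 2 ^ n ≤ 2 ^ n * a 0 := Nat.le_mul_of_pos_right _ (ha1 0)
    simpa using le_trans h2 h
  -- real-valued terms
  set f : ℕ → ℝ := fun n => 1 / (a n : ℝ) ^ l with hf
  have hterm : ∀ n, 1 / ((s (n + 1) : ℝ) - 1) = f n := by
    intro n
    have : ((s (n + 1) : ℝ) - 1) = (a n : ℝ) ^ l := by
      rw [hs n, Nat.cast_add, Nat.cast_pow, Nat.cast_one]
      simp [ha]
    rw [this]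
  rw [tsum_congr hterm]
  have hapos : ∀ n, (0 : ℝ) < (a n : ℝ) ^ l := by
    intro n
    have : (0 : ℝ) < (a n : ℝ) := by exact_mod_cast ha1 n
    positivity
  have hfpos : ∀ n, 0 < f n := fun n => one_div_pos.mpr (hapos n)
  have hfle : ∀ n, f n ≤ (1 / 2 : ℝ) ^ n := by
    intro n
    have h1 : (2 : ℕ) ^ n ≤ a n ^ l := le_trans (hpow n) (Nat.le_self_pow hl.ne' _)
    have h2 : ((2 : ℝ)) ^ n ≤ (a n : ℝ) ^ l := by exact_mod_cast h1
    show (1 : ℝ) / (a n : ℝ) ^ l ≤ (1 / 2) ^ n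
    rw [div_pow, one_pow, div_le_div_iff₀ (hapos n) (by positivity), one_mul, one_mul]
    exact h2
  have hgeo : Summable (fun n : ℕ => (1 / 2 : ℝ) ^ n) :=
    summable_geometric_of_lt_one (by norm_num) (by norm_num)
  have hsum : Summable f :=
    Summable.of_nonneg_of_le (fun n => (hfpos n).le) hfle hgeo
  -- suppose rational
  rintro ⟨r, hr⟩
  set x : ℝ := ∑' n, f n with hx
  set d : ℕ := r.den with hd
  have hdpos : 0 < d := r.pos
  set n : ℕ := d + 1 with hn
  set P : ℕ := a n ^ l with hP
  have hP1 : 1 ≤ P := Nat.one_le_pow _ _ (ha1 n)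
  have hP2d : 2 * d ≤ P := by
    have h1 : d ≤ 2 ^ d := (Nat.lt_two_pow_self (n := d)).le
    have h2 : 2 * d ≤ 2 ^ n := by
      rw [hn, pow_succ]
      have := Nat.mul_le_mul_left 2 h1
      linarith
    exact le_trans h2 (le_trans (hpow n) (Nat.le_self_pow hl.ne' _))
  have hdvdP : ∀ m ∈ Finset.range (n + 1), a m ^ l ∣ P := by
    intro m hm
    rw [Finset.mem_range] at hm
    have hdvd : a m ∣ a n :=
      Finset.prod_dvd_prod_of_subset _ _ _ (Finset.range_subset_range.mpr (by omega))
    exact pow_dvd_pow_of_dvd hdvd l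
  set N : ℕ := ∑ m ∈ Finset.range (n + 1), P / a m ^ l with hNdef
  have hN : (P : ℝ) * ∑ m ∈ Finset.range (n + 1), f m = (N : ℝ) := by
    rw [Finset.mul_sum, hNdef, Nat.cast_sum]
    refine Finset.sum_congr rfl fun m hm => ?_
    have hdvd := hdvdP m hm
    have hne : ((a m ^ l : ℕ) : ℝ) ≠ 0 := by
      have h0 : 0 < a m ^ l := Nat.one_le_pow l (a m) (ha1 m)
      exact Nat.cast_ne_zero.mpr h0.ne'
    rw [Nat.cast_div hdvd hne]
    show (P : ℝ) * (1 / (a m : ℝ) ^ l) = (P : ℝ) / ((a m ^ l : ℕ) : ℝ)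
    push_cast
    ring
  set T : ℝ := ∑' j : ℕ, f (j + (n + 1)) with hT
  have hsplit : (∑ m ∈ Finset.range (n + 1), f m) + T = x := Summable.sum_add_tsum_nat_add (n + 1) hsum
  have hsum' : Summable fun j : ℕ => f (j + (n + 1)) := (summable_nat_add_iff (n + 1)).mpr hsum
  have hTpos : 0 < T := Summable.tsum_pos hsum' (fun i => (hfpos _).le) 0 (hfpos _)
  have htail : ∀ j : ℕ, f (j + (n + 1)) ≤ (1 / 2) ^ j * f (n + 1) := by
    intro j
    have h1 : 2 ^ j * a (n + 1) ^ l ≤ a (n + 1 + j) ^ l := by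
      calc 2 ^ j * a (n + 1) ^ l ≤ (2 ^ j) ^ l * a (n + 1) ^ l :=
            Nat.mul_le_mul_right _ (Nat.le_self_pow hl.ne' _)
        _ = (2 ^ j * a (n + 1)) ^ l := (mul_pow _ _ _).symm
        _ ≤ a (n + 1 + j) ^ l := Nat.pow_le_pow_left (hstep (n + 1) j) l
    have h2 : (2 : ℝ) ^ j * (a (n + 1) : ℝ) ^ l ≤ (a (n + 1 + j) : ℝ) ^ l := by
      exact_mod_cast h1
    have hrw : j + (n + 1) = n + 1 + j := by omega
    rw [hrw]
    have h3 : (1 : ℝ) / (a (n + 1 + j) : ℝ) ^ l ≤ 1 / ((2 : ℝ) ^ j * (a (n + 1) : ℝ) ^ l) :=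
      one_div_le_one_div_of_le (by have := hapos (n + 1); positivity) h2
    calc f (n + 1 + j) ≤ 1 / ((2 : ℝ) ^ j * (a (n + 1) : ℝ) ^ l) := h3
      _ = (1 / 2) ^ j * f (n + 1) := by
          show _ = (1 / 2 : ℝ) ^ j * (1 / (a (n + 1) : ℝ) ^ l)
          rw [div_pow, one_pow, div_mul_div_comm, one_mul]
  have hTle : T ≤ 2 * f (n + 1) := by
    have hg2 : Summable fun j : ℕ => (1 / 2 : ℝ) ^ j * f (n + 1) := hgeo.mul_right _
    have h := Summable.tsum_le_tsum htail hsum' hg2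
    rwa [tsum_mul_right, tsum_geometric_two] at h
  have hfn1 : f (n + 1) ≤ 1 / ((P : ℝ) * ((P : ℝ) + 1)) := by
    have h1 : P * (P + 1) ≤ a (n + 1) ^ l := by
      rw [harec n, mul_pow]
      calc P * (P + 1) ≤ P * (P + 1) ^ l :=
            Nat.mul_le_mul_left _ (Nat.le_self_pow hl.ne' _)
        _ = a n ^ l * (a n ^ l + 1) ^ l := by rw [hP]
    have h2 : ((P : ℝ) * ((P : ℝ) + 1)) ≤ (a (n + 1) : ℝ) ^ l := by exact_mod_cast h1
    have hPposR : (0 : ℝ) < (P : ℝ) := by exact_mod_cast hP1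
    exact one_div_le_one_div_of_le (by positivity) h2
  have hdx : (d : ℝ) * x = (r.num : ℝ) := by
    rw [← hr, hd]
    have h : ((r.den : ℚ)) * r = (r.num : ℚ) := by
      rw [mul_comm]; exact_mod_cast Rat.mul_den_eq_num r
    exact_mod_cast congrArg (fun q : ℚ => (q : ℝ)) h
  set z : ℤ := r.num * P - (d : ℤ) * N with hzdef
  have hz : (z : ℝ) = (d : ℝ) * P * T := by
    have hTx : T = x - ∑ m ∈ Finset.range (n + 1), f m := by linarith [hsplit]
    rw [hzdef]
    push_cast
    linear_combination (-(P : ℝ)) * hdx + (d : ℝ) * hN - (d : ℝ) * (P : ℝ) * hsplit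
  have hPposR : (0 : ℝ) < (P : ℝ) := by exact_mod_cast hP1
  have hdposR : (0 : ℝ) < (d : ℝ) := by exact_mod_cast hdpos
  have hzpos : (0 : ℝ) < (z : ℝ) := by
    rw [hz]; exact mul_pos (mul_pos hdposR hPposR) hTpos
  have hzlt : (z : ℝ) < 1 := by
    have hT2 : T ≤ 2 / ((P : ℝ) * ((P : ℝ) + 1)) := by
      calc T ≤ 2 * f (n + 1) := hTle
        _ ≤ 2 * (1 / ((P : ℝ) * ((P : ℝ) + 1))) := by linarith [hfn1]
        _ = 2 / ((P : ℝ) * ((P : ℝ) + 1)) := by ring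
    have h3 : (d : ℝ) * P * T ≤ (d : ℝ) * P * (2 / ((P : ℝ) * ((P : ℝ) + 1))) :=
      mul_le_mul_of_nonneg_left hT2 (by positivity)
    have h4 : (d : ℝ) * P * (2 / ((P : ℝ) * ((P : ℝ) + 1))) = 2 * (d : ℝ) / ((P : ℝ) + 1) := by
      field_simp
    have h5 : 2 * (d : ℝ) / ((P : ℝ) + 1) < 1 := by
      rw [div_lt_one (by positivity)]
      have : ((2 * d : ℕ) : ℝ) ≤ (P : ℝ) := by exact_mod_cast hP2d
      push_cast at this
      linarith
    rw [hz]
    linarith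
  have h6 : (0 : ℤ) < z := by exact_mod_cast hzpos
  have h7 : (1 : ℝ) ≤ (z : ℝ) := by exact_mod_cast h6
  linarith

/-- The Kellogg–Curtiss-type constant `K_{k,ℓ} = ∑ 1/(s_{n+1}(k,ℓ) - 1)` is irrational;
in particular so is the Kellogg–Curtiss constant `K = ∑ 1/(S_n - 1)`, where `S` is
Sylvester's sequence `S_0 = 2`, `S_{n+1} = (S_n - 1) S_n + 1`. -/
theorem stmt_18 (k l : ℕ) (hk : 0 < k) (hl : 0 < l)
    (s : ℕ → ℕ) (hs0 : s 0 = k)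
    (hs : ∀ n : ℕ, s (n + 1) = (∏ i ∈ Finset.range (n + 1), s i) ^ l + 1) :
    Irrational (∑' n : ℕ, 1 / ((s (n + 1) : ℝ) - 1)) ∧
    ∀ S : ℕ → ℕ, S 0 = 2 → (∀ n : ℕ, S (n + 1) = (S n - 1) * S n + 1) →
      Irrational (∑' n : ℕ, 1 / ((S n : ℝ) - 1)) := by
  constructor
  · exact aux_irr l hl s (hs0 ▸ hk) hs
  · intro S hS0 hSrec
    have hS2 : ∀ n, 2 ≤ S n := by
      intro n
      induction n with
      | zero => omega
      | succ n ih =>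
        rw [hSrec]
        have h1 : 1 ≤ S n - 1 := by omega
        have := Nat.mul_le_mul h1 ih
        omega
    set s' : ℕ → ℕ := fun n => match n with | 0 => 1 | m + 1 => S m with hs'def
    have hs' : ∀ n, s' (n + 1) = (∏ i ∈ Finset.range (n + 1), s' i) ^ 1 + 1 := by
      intro n
      induction n with
      | zero => simp [hs'def, hS0]
      | succ n ih =>
        simp only [pow_one] at ih ⊢
        have hprod : ∏ i ∈ Finset.range (n + 1), s' i = S n - 1 := by
          have h2 := hS2 n
          have hsn : s' (n + 1) = S n := rfl
          omega
        rw [Finset.prod_range_succ, hprod]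
        show S (n + 1) = (S n - 1) * S n + 1
        exact hSrec n
    have h := aux_irr 1 one_pos s' (le_refl 1) hs'
    exact h
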